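/- Let p ∈ ℝ^d, q ∈ ℝ^e, and r ∈ ℝ^m be probability vectors with strictly positive entries. If the descending rearrangement of p ⊗ r equals the descending rearrangement of q ⊗ r (as multisets of entries, including multiplicities, and d·m = e·m), then the descending rearrangements of p and q coincide as multisets. In particular, a pure bipartite LOSR conversion that is impossible without a catalyst remains impossible with any pure-state strict catalyst. -/
import Mathlib

/-- Key cancellation lemma for multisets of positive reals. -/
theorem multiset_tensor_cancel (n : ℕ) :
    ∀ (P Q R : Multiset ℝ), Multiset.card P = n →
    (∀ x ∈ P, (0:ℝ) < x) → (∀ x ∈ Q, (0:ℝ) < x) → (∀ x ∈ R, (0:ℝ) < x) → R ≠ 0 →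
    P.bind (fun a => R.map (a * ·)) = Q.bind (fun a => R.map (a * ·)) → P = Q := by
  induction n using Nat.strong_induction_on with
  | _ n IH =>
    intro P Q R hcard hP hQ hR hR0 h
    rcases eq_or_ne P 0 with hP0 | hP0
    · subst hP0
      simp only [Multiset.zero_bind] at h
      rcases eq_or_ne Q 0 with hQ0 | hQ0
      · exact hQ0.symm
      · exfalso
        obtain ⟨b, hb⟩ := Multiset.exists_mem_of_ne_zero hQ0
        obtain ⟨c, hc⟩ := Multiset.exists_mem_of_ne_zero hR0
        have : (b * c) ∈ Q.bind (fun a => R.map (a * ·)) := by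
          rw [Multiset.mem_bind]; exact ⟨b, hb, Multiset.mem_map_of_mem _ hc⟩
        rw [← h] at this; simp at this
    · -- P nonempty : take maxima
      have hPfin : P.toFinset.Nonempty := by
        obtain ⟨a, ha⟩ := Multiset.exists_mem_of_ne_zero hP0
        exact ⟨a, Multiset.mem_toFinset.mpr ha⟩
      have hRfin : R.toFinset.Nonempty := by
        obtain ⟨c, hc⟩ := Multiset.exists_mem_of_ne_zero hR0
        exact ⟨c, Multiset.mem_toFinset.mpr hc⟩
      set a := P.toFinset.max' hPfin with ha_def
      set c := R.toFinset.max' hRfin with hc_def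
      have haP : a ∈ P := Multiset.mem_toFinset.mp (P.toFinset.max'_mem hPfin)
      have hcR : c ∈ R := Multiset.mem_toFinset.mp (R.toFinset.max'_mem hRfin)
      have hamax : ∀ x ∈ P, x ≤ a := fun x hx =>
        P.toFinset.le_max' x (Multiset.mem_toFinset.mpr hx)
      have hcmax : ∀ x ∈ R, x ≤ c := fun x hx =>
        R.toFinset.le_max' x (Multiset.mem_toFinset.mpr hx)
      have hapos : 0 < a := hP a haP
      have hcpos : 0 < c := hR c hcR
      -- Q is nonempty
      have hmemL : (a * c) ∈ Q.bind (fun x => R.map (x * ·)) := by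
        rw [← h, Multiset.mem_bind]
        exact ⟨a, haP, Multiset.mem_map_of_mem _ hcR⟩
      rw [Multiset.mem_bind] at hmemL
      obtain ⟨b₀, hb₀Q, hb₀⟩ := hmemL
      have hQ0 : Q ≠ 0 := fun hzero => by simp [hzero] at hb₀Q
      have hQfin : Q.toFinset.Nonempty := ⟨b₀, Multiset.mem_toFinset.mpr hb₀Q⟩
      set b := Q.toFinset.max' hQfin with hb_def
      have hbQ : b ∈ Q := Multiset.mem_toFinset.mp (Q.toFinset.max'_mem hQfin)
      have hbmax : ∀ x ∈ Q, x ≤ b := fun x hx =>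
        Q.toFinset.le_max' x (Multiset.mem_toFinset.mpr hx)
      have hbpos : 0 < b := hQ b hbQ
      -- a * c ≤ b * c
      have h1 : a * c ≤ b * c := by
        rw [Multiset.mem_map] at hb₀
        obtain ⟨z, hzR, hz⟩ := hb₀
        rw [← hz]
        exact mul_le_mul (hbmax b₀ hb₀Q) (hcmax z hzR) (le_of_lt (hR z hzR)) hbpos.le
      have h2 : b * c ≤ a * c := by
        have hmemR : (b * c) ∈ P.bind (fun x => R.map (x * ·)) := by
          rw [h, Multiset.mem_bind]
          exact ⟨b, hbQ, Multiset.mem_map_of_mem _ hcR⟩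
        rw [Multiset.mem_bind] at hmemR
        obtain ⟨y, hyP, hy⟩ := hmemR
        rw [Multiset.mem_map] at hy
        obtain ⟨z, hzR, hz⟩ := hy
        rw [← hz]
        exact mul_le_mul (hamax y hyP) (hcmax z hzR) (le_of_lt (hR z hzR)) hapos.le
      have hab : a = b := mul_right_cancel₀ hcpos.ne' (le_antisymm h1 h2)
      -- erase a from both sides
      have hPe : P = a ::ₘ P.erase a := (Multiset.cons_erase haP).symm
      have hQe : Q = a ::ₘ Q.erase a := (Multiset.cons_erase (hab ▸ hbQ)).symm
      rw [hPe, hQe, Multiset.cons_bind, Multiset.cons_bind] at h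
      have h' := add_left_cancel h
      have hcard' : Multiset.card (P.erase a) < n := by
        rw [← hcard]; exact Multiset.card_erase_lt_of_mem haP
      have := IH _ hcard' (P.erase a) (Q.erase a) R rfl
        (fun x hx => hP x (Multiset.mem_of_mem_erase hx))
        (fun x hx => hQ x (Multiset.mem_of_mem_erase hx)) hR hR0 h'
      rw [hPe, hQe, this]

/-- Cancellation of tensor factors: if the multisets of entries of `p ⊗ r` and
`q ⊗ r` coincide (for strictly positive probability vectors), then the multisets
of entries of `p` and `q` coincide.  In particular a pure bipartite LOSR
conversion that is impossible without a catalyst remains impossible with any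
pure-state strict catalyst. -/
theorem tensor_cancellation {d e m : ℕ} (p : Fin d → ℝ) (q : Fin e → ℝ) (r : Fin m → ℝ)
    (hp : (∀ i, 0 < p i) ∧ ∑ i, p i = 1)
    (hq : (∀ i, 0 < q i) ∧ ∑ i, q i = 1)
    (hr : (∀ j, 0 < r j) ∧ ∑ j, r j = 1)
    (h : Finset.univ.val.map (fun x : Fin d × Fin m => p x.1 * r x.2)
       = Finset.univ.val.map (fun x : Fin e × Fin m => q x.1 * r x.2)) :
    Finset.univ.val.map p = Finset.univ.val.map q := by
  have key : ∀ (k : ℕ) (f : Fin k → ℝ),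
      Finset.univ.val.map (fun x : Fin k × Fin m => f x.1 * r x.2)
      = (Finset.univ.val.map f).bind (fun a => (Finset.univ.val.map r).map (a * ·)) := by
    intro k f
    rw [← Finset.univ_product_univ, Finset.product_val]
    simp only [SProd.sprod, Multiset.product, Multiset.map_bind, Multiset.map_map,
      Multiset.bind_map, Function.comp]
  rw [key d p, key e q] at h
  have hm : 0 < m := by
    rcases Nat.eq_zero_or_pos m with h0 | h0
    · exfalso; subst h0; simpa using hr.2
    · exact h0
  have hR0 : (Finset.univ.val.map r : Multiset ℝ) ≠ 0 := by
    simp only [ne_eq, Multiset.map_eq_zero, Finset.val_eq_zero, ← Finset.not_nonempty_iff_eq_empty]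
    intro hcon
    exact hcon (Finset.univ_nonempty_iff.mpr (Fin.pos_iff_nonempty.mp hm))
  refine multiset_tensor_cancel (Multiset.card (Finset.univ.val.map p))
    _ _ _ rfl ?_ ?_ ?_ hR0 h
  · intro x hx; obtain ⟨i, _, rfl⟩ := Multiset.mem_map.mp hx; exact hp.1 i
  · intro x hx; obtain ⟨i, _, rfl⟩ := Multiset.mem_map.mp hx; exact hq.1 i
  · intro x hx; obtain ⟨j, _, rfl⟩ := Multiset.mem_map.mp hx; exact hr.1 j
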